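/- Let w : ℝ² × ℝ² → ℝ be a measurable kernel that is symmetric of positive type, and let g : ℝ² → [0,∞) be measurable with ∫_{ℝ²}∫_{ℝ²} e^{|w(x,y)|}·g(x)·g(y) dx dy < ∞. Then ∫_{ℝ²}∫_{ℝ²} e^{w(x,y)}·g(x)·g(y) dx dy ≥ ∫_{ℝ²}∫_{ℝ²} e^{−w(x,y)}·g(x)·g(y) dx dy. -/

import Mathlib

open MeasureTheory Finset
open scoped ENNReal

/-- A kernel of positive type on a general space. -/
def PosType {α : Type*} (K : α → α → ℝ) : Prop :=
  ∀ (k : ℕ) (z : Fin k → α) (c : Fin k → ℝ),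
    0 ≤ ∑ i : Fin k, ∑ j : Fin k, c i * c j * K (z i) (z j)

/-- Schur product theorem for kernels of positive type. -/
lemma PosType.mul {α : Type*} {K₁ K₂ : α → α → ℝ} (h₁ : PosType K₁)
    (h₂sym : ∀ x y, K₂ x y = K₂ y x) (h₂ : PosType K₂) :
    PosType (fun x y => K₁ x y * K₂ x y) := by
  intro k z c
  set B : Matrix (Fin k) (Fin k) ℝ := Matrix.of (fun i j => K₂ (z i) (z j)) with hB
  have hBps : B.PosSemidef := by
    refine .of_dotProduct_mulVec_nonneg ?_ ?_
    · ext i j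
      simp [Matrix.conjTranspose_apply, hB, h₂sym (z j) (z i)]
    · intro x
      have h := h₂ k z x
      have : ∑ i : Fin k, ∑ j : Fin k, x i * x j * K₂ (z i) (z j)
          = ∑ i : Fin k, ∑ j : Fin k, x i * (B i j * x j) := by
        refine Finset.sum_congr rfl fun i _ => Finset.sum_congr rfl fun j _ => ?_
        simp only [hB, Matrix.of_apply]; ring
      rw [this] at h
      simpa [dotProduct, Matrix.mulVec, Finset.mul_sum] using h
  obtain ⟨S, hS⟩ : ∃ S : Matrix (Fin k) (Fin k) ℝ, B = star S * S := by
    open scoped MatrixOrder in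
    exact CStarAlgebra.nonneg_iff_eq_star_mul_self.mp hBps.nonneg
  have hBS : ∀ i j, K₂ (z i) (z j) = ∑ r, S r i * S r j := by
    intro i j
    have := congrFun (congrFun hS i) j
    simp only [Matrix.mul_apply, Matrix.star_apply, star_trivial] at this
    rw [hB] at this
    simp only [Matrix.of_apply] at this
    rw [this]
  calc (0:ℝ) ≤ ∑ r, ∑ i, ∑ j, (c i * S r i) * (c j * S r j) * K₁ (z i) (z j) := by
        exact Finset.sum_nonneg fun r _ => h₁ k z (fun i => c i * S r i)
    _ = ∑ i, ∑ j, c i * c j * (K₁ (z i) (z j) * K₂ (z i) (z j)) := by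
        rw [Finset.sum_comm]
        refine Finset.sum_congr rfl fun i _ => ?_
        rw [Finset.sum_comm]
        refine Finset.sum_congr rfl fun j _ => ?_
        rw [hBS i j, Finset.mul_sum, Finset.mul_sum]
        exact Finset.sum_congr rfl fun r _ => by ring
lemma PosType.pow {α : Type*} {w : α → α → ℝ} (hsym : ∀ x y, w x y = w y x)
    (hpos : PosType w) : ∀ n : ℕ, PosType (fun x y => (w x y) ^ n) := by
  intro n
  induction n with
  | zero =>
      intro k z c
      have : ∑ i : Fin k, ∑ j : Fin k, c i * c j * (w (z i) (z j)) ^ 0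
          = (∑ i : Fin k, c i) ^ 2 := by
        simp [sq, Finset.sum_mul_sum]
      rw [this]; positivity
  | succ n ih =>
      have := ih.mul hsym hpos
      intro k z c
      have h := this k z c
      simpa [pow_succ] using h

/-- The kernel `e^w - e^{-w}` is of positive type when `w` is. -/
lemma posType_sinh {α : Type*} {w : α → α → ℝ} (hsym : ∀ x y, w x y = w y x)
    (hpos : PosType w) :
    PosType (fun x y => Real.exp (w x y) - Real.exp (-(w x y))) := by
  intro k z c
  have hterm : ∀ (i j : Fin k), HasSum
      (fun n : ℕ => c i * c j * ((w (z i) (z j)) ^ n / n.factorial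
        - (-(w (z i) (z j))) ^ n / n.factorial))
      (c i * c j * (Real.exp (w (z i) (z j)) - Real.exp (-(w (z i) (z j))))) := by
    intro i j
    have h1 : HasSum (fun n : ℕ => (w (z i) (z j)) ^ n / n.factorial)
        (Real.exp (w (z i) (z j))) := by
      rw [Real.exp_eq_exp_ℝ]; exact NormedSpace.expSeries_div_hasSum_exp _
    have h2 : HasSum (fun n : ℕ => (-(w (z i) (z j))) ^ n / n.factorial)
        (Real.exp (-(w (z i) (z j)))) := by
      rw [Real.exp_eq_exp_ℝ]; exact NormedSpace.expSeries_div_hasSum_exp _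
    exact (h1.sub h2).mul_left _
  have hS : HasSum
      (fun n : ℕ => ∑ i : Fin k, ∑ j : Fin k, c i * c j * ((w (z i) (z j)) ^ n / n.factorial
        - (-(w (z i) (z j))) ^ n / n.factorial))
      (∑ i : Fin k, ∑ j : Fin k,
        c i * c j * (Real.exp (w (z i) (z j)) - Real.exp (-(w (z i) (z j))))) := by
    refine hasSum_sum fun i _ => hasSum_sum fun j _ => hterm i j
  have hnn : ∀ n : ℕ, 0 ≤ ∑ i : Fin k, ∑ j : Fin k,
      c i * c j * ((w (z i) (z j)) ^ n / n.factorial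
        - (-(w (z i) (z j))) ^ n / n.factorial) := by
    intro n
    have heq : ∑ i : Fin k, ∑ j : Fin k, c i * c j * ((w (z i) (z j)) ^ n / n.factorial
        - (-(w (z i) (z j))) ^ n / n.factorial)
        = ((1 - (-1:ℝ) ^ n) / n.factorial) *
          ∑ i : Fin k, ∑ j : Fin k, c i * c j * (w (z i) (z j)) ^ n := by
      rw [Finset.mul_sum]
      refine Finset.sum_congr rfl fun i _ => ?_
      rw [Finset.mul_sum]
      refine Finset.sum_congr rfl fun j _ => ?_
      rw [neg_pow]
      ring
    rw [heq]
    have h1 : (0:ℝ) ≤ (1 - (-1:ℝ) ^ n) / n.factorial := by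
      apply div_nonneg _ (by positivity)
      rcases neg_one_pow_eq_or ℝ n with h | h <;> rw [h] <;> norm_num
    exact mul_nonneg h1 (hpos.pow hsym n k z c)
  have := hS.tsum_eq
  rw [← this]
  exact tsum_nonneg hnn

section helpers

variable {α : Type} [MeasurableSpace α] (ν : Measure α) [IsFiniteMeasure ν]

lemma smul_prod_smul {β : Type} [MeasurableSpace β] (μ : Measure β) [IsFiniteMeasure μ]
    (c d : ℝ≥0∞) (hc : c ≠ ⊤) (hd : d ≠ ⊤) :
    (c • ν).prod (d • μ) = (c * d) • (ν.prod μ) := by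
  have h1 : IsFiniteMeasure (c • ν) :=
    ⟨by simpa [lt_top_iff_ne_top] using ENNReal.mul_ne_top hc (measure_ne_top ν _)⟩
  have h2 : IsFiniteMeasure (d • μ) :=
    ⟨by simpa [lt_top_iff_ne_top] using ENNReal.mul_ne_top hd (measure_ne_top μ _)⟩
  refine Measure.prod_eq fun s t hs ht => ?_
  simp only [Measure.smul_apply, smul_eq_mul, Measure.prod_prod]
  ring

lemma integrable_comp_fst {f : α → ℝ} (hfm : Measurable f) (hf : Integrable f ν) :
    Integrable (fun p : α × α => f p.1) (ν.prod ν) := by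
  have hmap : Measure.map Prod.fst (ν.prod ν) = (ν Set.univ) • ν := Measure.map_fst_prod
  have hint : Integrable f (Measure.map Prod.fst (ν.prod ν)) := by
    rw [hmap]; exact hf.smul_measure (measure_ne_top ν _)
  have := (integrable_map_measure hfm.aestronglyMeasurable measurable_fst.aemeasurable).mp hint
  simpa [Function.comp_def] using this

lemma integral_comp_fst {f : α → ℝ} (hfm : Measurable f) :
    ∫ p : α × α, f p.1 ∂(ν.prod ν) = (ν Set.univ).toReal * ∫ x, f x ∂ν := by
  have hmap : Measure.map Prod.fst (ν.prod ν) = (ν Set.univ) • ν := Measure.map_fst_prod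
  rw [← integral_map measurable_fst.aemeasurable hfm.aestronglyMeasurable, hmap,
    integral_smul_measure]
  simp

lemma integrable_comp_snd {f : α → ℝ} (hfm : Measurable f) (hf : Integrable f ν) :
    Integrable (fun p : α × α => f p.2) (ν.prod ν) := by
  have hmap : Measure.map Prod.snd (ν.prod ν) = (ν Set.univ) • ν := Measure.map_snd_prod
  have hint : Integrable f (Measure.map Prod.snd (ν.prod ν)) := by
    rw [hmap]; exact hf.smul_measure (measure_ne_top ν _)
  have := (integrable_map_measure hfm.aestronglyMeasurable measurable_snd.aemeasurable).mp hint
  simpa [Function.comp_def] using this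

lemma integral_comp_snd {f : α → ℝ} (hfm : Measurable f) :
    ∫ p : α × α, f p.2 ∂(ν.prod ν) = (ν Set.univ).toReal * ∫ x, f x ∂ν := by
  have hmap : Measure.map Prod.snd (ν.prod ν) = (ν Set.univ) • ν := Measure.map_snd_prod
  rw [← integral_map measurable_snd.aemeasurable hfm.aestronglyMeasurable, hmap,
    integral_smul_measure]
  simp

lemma map_prodmap (T₁ T₂ : α × α → α) (h₁ : Measurable T₁) (h₂ : Measurable T₂)
    (hm₁ : Measure.map T₁ (ν.prod ν) = (ν Set.univ) • ν)
    (hm₂ : Measure.map T₂ (ν.prod ν) = (ν Set.univ) • ν) :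
    Measure.map (Prod.map T₁ T₂) ((ν.prod ν).prod (ν.prod ν))
      = ((ν Set.univ) * (ν Set.univ)) • (ν.prod ν) := by
  rw [← Measure.map_prod_map _ _ h₁ h₂, hm₁, hm₂,
    smul_prod_smul ν ν _ _ (measure_ne_top ν _) (measure_ne_top ν _)]

lemma integrable_comp₂ (T₁ T₂ : α × α → α) (h₁ : Measurable T₁) (h₂ : Measurable T₂)
    (hm₁ : Measure.map T₁ (ν.prod ν) = (ν Set.univ) • ν)
    (hm₂ : Measure.map T₂ (ν.prod ν) = (ν Set.univ) • ν)
    {f : α × α → ℝ} (hfm : Measurable f) (hf : Integrable f (ν.prod ν)) :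
    Integrable (fun p : (α × α) × (α × α) => f (T₁ p.1, T₂ p.2))
      ((ν.prod ν).prod (ν.prod ν)) := by
  have hmap := map_prodmap ν T₁ T₂ h₁ h₂ hm₁ hm₂
  have hint : Integrable f (Measure.map (Prod.map T₁ T₂) ((ν.prod ν).prod (ν.prod ν))) := by
    rw [hmap]
    exact hf.smul_measure (ENNReal.mul_ne_top (measure_ne_top ν _) (measure_ne_top ν _))
  have := (integrable_map_measure hfm.aestronglyMeasurable
    (h₁.prodMap h₂).aemeasurable).mp hint
  simpa [Function.comp_def, Prod.map] using this

lemma integral_comp₂ (T₁ T₂ : α × α → α) (h₁ : Measurable T₁) (h₂ : Measurable T₂)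
    (hm₁ : Measure.map T₁ (ν.prod ν) = (ν Set.univ) • ν)
    (hm₂ : Measure.map T₂ (ν.prod ν) = (ν Set.univ) • ν)
    {f : α × α → ℝ} (hfm : Measurable f) :
    ∫ p : (α × α) × (α × α), f (T₁ p.1, T₂ p.2) ∂((ν.prod ν).prod (ν.prod ν))
      = ((ν Set.univ).toReal * (ν Set.univ).toReal) * ∫ z, f z ∂(ν.prod ν) := by
  have hmap := map_prodmap ν T₁ T₂ h₁ h₂ hm₁ hm₂
  have : ∫ p : (α × α) × (α × α), f (T₁ p.1, T₂ p.2) ∂((ν.prod ν).prod (ν.prod ν))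
      = ∫ z, f z ∂(Measure.map (Prod.map T₁ T₂) ((ν.prod ν).prod (ν.prod ν))) := by
    rw [integral_map (h₁.prodMap h₂).aemeasurable hfm.aestronglyMeasurable]
    rfl
  rw [this, hmap, integral_smul_measure, ENNReal.toReal_mul]
  simp [smul_eq_mul]

end helpers
lemma integral_add₄ {β : Type*} [MeasurableSpace β] (μ : Measure β) {f₁ f₂ f₃ f₄ : β → ℝ}
    (h₁ : Integrable f₁ μ) (h₂ : Integrable f₂ μ) (h₃ : Integrable f₃ μ)
    (h₄ : Integrable f₄ μ) :
    ∫ x, (f₁ x + f₂ x + f₃ x + f₄ x) ∂μ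
      = (∫ x, f₁ x ∂μ) + (∫ x, f₂ x ∂μ) + (∫ x, f₃ x ∂μ) + (∫ x, f₄ x ∂μ) := by
  have e1 : ∫ x, (f₁ x + f₂ x + f₃ x + f₄ x) ∂μ
      = (∫ x, (f₁ x + f₂ x + f₃ x) ∂μ) + ∫ x, f₄ x ∂μ :=
    integral_add ((h₁.add h₂).add h₃) h₄
  have e2 : ∫ x, (f₁ x + f₂ x + f₃ x) ∂μ
      = (∫ x, (f₁ x + f₂ x) ∂μ) + ∫ x, f₃ x ∂μ := integral_add (h₁.add h₂) h₃
  have e3 : ∫ x, (f₁ x + f₂ x) ∂μ = (∫ x, f₁ x ∂μ) + ∫ x, f₂ x ∂μ := integral_add h₁ h₂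
  rw [e1, e2, e3]

lemma posType_doubling : ∀ (n : ℕ) (α : Type) (_ : MeasurableSpace α) (ν : Measure α)
    (_ : IsFiniteMeasure ν) (K : α → α → ℝ)
    (_ : Measurable (fun p : α × α => K p.1 p.2))
    (_ : ∀ x y, K x y = K y x) (_ : PosType K)
    (_ : Integrable (fun p : α × α => K p.1 p.2) (ν.prod ν))
    (_ : Integrable (fun x => K x x) ν),
    -((2:ℝ)⁻¹ ^ n * ((ν Set.univ).toReal * ∫ x, K x x ∂ν))
      ≤ ∫ p : α × α, K p.1 p.2 ∂(ν.prod ν) := by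
  intro n
  induction n with
  | zero =>
    intro α mα ν hν K hmeas hsym hpos hint hdiag
    set m := (ν Set.univ).toReal with hm
    set D := ∫ x, K x x ∂ν with hD
    set I := ∫ p : α × α, K p.1 p.2 ∂(ν.prod ν) with hI
    have hdm : Measurable fun x => K x x :=
      hmeas.comp (measurable_id.prodMk measurable_id)
    have hq : ∀ p : α × α, 0 ≤ K p.1 p.1 + K p.1 p.2 + K p.2 p.1 + K p.2 p.2 := by
      intro p
      have := hpos 2 ![p.1, p.2] ![1, 1]
      simp [Fin.sum_univ_two] at this
      linarith
    have i11 : Integrable (fun p : α × α => K p.1 p.1) (ν.prod ν) :=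
      integrable_comp_fst ν hdm hdiag
    have i22 : Integrable (fun p : α × α => K p.2 p.2) (ν.prod ν) :=
      integrable_comp_snd ν hdm hdiag
    have e21 : (fun p : α × α => K p.2 p.1) = fun p : α × α => K p.1 p.2 :=
      funext fun p => hsym _ _
    have i21 : Integrable (fun p : α × α => K p.2 p.1) (ν.prod ν) := by
      rw [e21]; exact hint
    have h0 : 0 ≤ ∫ p : α × α,
        (K p.1 p.1 + K p.1 p.2 + K p.2 p.1 + K p.2 p.2) ∂(ν.prod ν) :=
      integral_nonneg hq
    have hsplit : ∫ p : α × α,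
        (K p.1 p.1 + K p.1 p.2 + K p.2 p.1 + K p.2 p.2) ∂(ν.prod ν)
        = m * D + I + I + m * D := by
      rw [integral_add₄ (ν.prod ν) i11 hint i21 i22,
        integral_comp_fst ν hdm, integral_comp_snd ν hdm]
      have : ∫ p : α × α, K p.2 p.1 ∂(ν.prod ν) = I := by rw [e21]
      rw [this]
    rw [hsplit] at h0
    simp only [pow_zero, one_mul]
    linarith
  | succ n ih =>
    intro α mα ν hν K hmeas hsym hpos hint hdiag
    set m := (ν Set.univ).toReal with hm
    set D := ∫ x, K x x ∂ν with hD
    set I := ∫ p : α × α, K p.1 p.2 ∂(ν.prod ν) with hI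
    by_cases hm0 : ν Set.univ = 0
    · have hν0 : ν = 0 := Measure.measure_univ_eq_zero.mp hm0
      have : I = 0 := by rw [hI, hν0]; simp
      rw [this, hm, hm0]
      simp
    -- main case
    set K₂ : (α × α) → (α × α) → ℝ := fun X Y =>
      K X.1 Y.1 + K X.1 Y.2 + K X.2 Y.1 + K X.2 Y.2 with hK₂
    have hdm : Measurable fun x => K x x :=
      hmeas.comp (measurable_id.prodMk measurable_id)
    have mfst : Measurable (Prod.fst : α × α → α) := measurable_fst
    have msnd : Measurable (Prod.snd : α × α → α) := measurable_snd
    have hmapf : Measure.map Prod.fst (ν.prod ν) = (ν Set.univ) • ν := Measure.map_fst_prod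
    have hmaps : Measure.map Prod.snd (ν.prod ν) = (ν Set.univ) • ν := Measure.map_snd_prod
    have hmeas₂ : Measurable (fun p : (α × α) × (α × α) => K₂ p.1 p.2) := by
      apply Measurable.add
      apply Measurable.add
      apply Measurable.add
      · exact hmeas.comp ((measurable_fst.fst).prodMk (measurable_snd.fst))
      · exact hmeas.comp ((measurable_fst.fst).prodMk (measurable_snd.snd))
      · exact hmeas.comp ((measurable_fst.snd).prodMk (measurable_snd.fst))
      · exact hmeas.comp ((measurable_fst.snd).prodMk (measurable_snd.snd))
    have hsym₂ : ∀ X Y, K₂ X Y = K₂ Y X := by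
      intro X Y
      simp only [hK₂]
      rw [hsym X.1 Y.1, hsym X.1 Y.2, hsym X.2 Y.1, hsym X.2 Y.2]
      ring
    have hpos₂ : PosType K₂ := by
      intro k z c
      have h := hpos (k + k) (Fin.append (fun i => (z i).1) (fun i => (z i).2))
        (Fin.append c c)
      have e : ∑ i : Fin (k+k), ∑ j : Fin (k+k),
          (Fin.append c c) i * (Fin.append c c) j *
            K ((Fin.append (fun i => (z i).1) (fun i => (z i).2)) i)
              ((Fin.append (fun i => (z i).1) (fun i => (z i).2)) j)
          = ∑ i : Fin k, ∑ j : Fin k, c i * c j * K₂ (z i) (z j) := by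
        simp only [Fin.sum_univ_add, Fin.append_left, Fin.append_right, hK₂, mul_add,
          Finset.sum_add_distrib]
        ring
      exact e ▸ h
    have P4 : ∀ (T₁ T₂ : α × α → α), Measurable T₁ → Measurable T₂ →
        Measure.map T₁ (ν.prod ν) = (ν Set.univ) • ν →
        Measure.map T₂ (ν.prod ν) = (ν Set.univ) • ν →
        Integrable (fun p : (α × α) × (α × α) => K (T₁ p.1) (T₂ p.2))
          ((ν.prod ν).prod (ν.prod ν)) := by
      intro T₁ T₂ h₁ h₂ e₁ e₂
      exact integrable_comp₂ ν T₁ T₂ h₁ h₂ e₁ e₂ hmeas hint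
    have I4 : ∀ (T₁ T₂ : α × α → α), Measurable T₁ → Measurable T₂ →
        Measure.map T₁ (ν.prod ν) = (ν Set.univ) • ν →
        Measure.map T₂ (ν.prod ν) = (ν Set.univ) • ν →
        ∫ p : (α × α) × (α × α), K (T₁ p.1) (T₂ p.2) ∂((ν.prod ν).prod (ν.prod ν))
          = (m * m) * I := by
      intro T₁ T₂ h₁ h₂ e₁ e₂
      exact integral_comp₂ ν T₁ T₂ h₁ h₂ e₁ e₂ hmeas
    have hint₂ : Integrable (fun p : (α × α) × (α × α) => K₂ p.1 p.2)
        ((ν.prod ν).prod (ν.prod ν)) := by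
      simp only [hK₂]
      exact (((P4 _ _ mfst mfst hmapf hmapf).add (P4 _ _ mfst msnd hmapf hmaps)).add
        (P4 _ _ msnd mfst hmaps hmapf)).add (P4 _ _ msnd msnd hmaps hmaps)
    have e21 : (fun X : α × α => K X.2 X.1) = fun X : α × α => K X.1 X.2 :=
      funext fun X => hsym _ _
    have i21 : Integrable (fun X : α × α => K X.2 X.1) (ν.prod ν) := by
      rw [e21]; exact hint
    have hdiag₂ : Integrable (fun X : α × α => K₂ X X) (ν.prod ν) := by
      simp only [hK₂]
      exact (((integrable_comp_fst ν hdm hdiag).add hint).add i21).add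
        (integrable_comp_snd ν hdm hdiag)
    have key := ih (α × α) inferInstance (ν.prod ν) inferInstance K₂ hmeas₂ hsym₂ hpos₂
      hint₂ hdiag₂
    have hm₂ : ((ν.prod ν) Set.univ).toReal = m * m := by
      rw [← Set.univ_prod_univ, Measure.prod_prod, ENNReal.toReal_mul]
    have hD₂ : ∫ X : α × α, K₂ X X ∂(ν.prod ν) = m * D + I + I + m * D := by
      simp only [hK₂]
      rw [integral_add₄ (ν.prod ν) (integrable_comp_fst ν hdm hdiag) hint i21
          (integrable_comp_snd ν hdm hdiag),
        integral_comp_fst ν hdm, integral_comp_snd ν hdm]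
      have : ∫ X : α × α, K X.2 X.1 ∂(ν.prod ν) = I := by rw [e21]
      rw [this]
    have hI₂ : ∫ p : (α × α) × (α × α), K₂ p.1 p.2 ∂((ν.prod ν).prod (ν.prod ν))
        = 4 * ((m * m) * I) := by
      simp only [hK₂]
      rw [integral_add₄ ((ν.prod ν).prod (ν.prod ν)) (P4 _ _ mfst mfst hmapf hmapf)
          (P4 _ _ mfst msnd hmapf hmaps) (P4 _ _ msnd mfst hmaps hmapf)
          (P4 _ _ msnd msnd hmaps hmaps),
        I4 _ _ mfst mfst hmapf hmapf, I4 _ _ mfst msnd hmapf hmaps,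
        I4 _ _ msnd mfst hmaps hmapf, I4 _ _ msnd msnd hmaps hmaps]
      ring
    rw [hI₂, hm₂, hD₂] at key
    have hDnn : 0 ≤ D := by
      refine integral_nonneg fun x => ?_
      have := hpos 1 ![x] ![1]
      simpa using this
    have hmnn : 0 ≤ m := ENNReal.toReal_nonneg
    have hmpos : 0 < m := by
      rcases lt_or_eq_of_le hmnn with h | h
      · exact h
      · exact absurd ((ENNReal.toReal_eq_zero_iff _).mp h.symm |>.resolve_right
          (measure_ne_top ν _)) hm0
    have hc : (0:ℝ) ≤ (2:ℝ)⁻¹ ^ n := by positivity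
    set c := (2:ℝ)⁻¹ ^ n with hcdef
    have key' : 0 ≤ (4 + 2 * c) * I + 2 * c * m * D := by
      nlinarith [key, mul_pos hmpos hmpos]
    rw [pow_succ]
    nlinarith [mul_nonneg hmnn hDnn, mul_nonneg hc (mul_nonneg hmnn hDnn),
      mul_nonneg (mul_nonneg hc hc) (mul_nonneg hmnn hDnn)]
lemma posType_integral_nonneg {α : Type} [MeasurableSpace α] (ν : Measure α)
    [IsFiniteMeasure ν] (K : α → α → ℝ)
    (hmeas : Measurable (fun p : α × α => K p.1 p.2))
    (hsym : ∀ x y, K x y = K y x) (hpos : PosType K)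
    (hint : Integrable (fun p : α × α => K p.1 p.2) (ν.prod ν))
    (hdiag : Integrable (fun x => K x x) ν) :
    0 ≤ ∫ p : α × α, K p.1 p.2 ∂(ν.prod ν) := by
  have h := fun n => posType_doubling n α ‹_› ν ‹_› K hmeas hsym hpos hint hdiag
  set A := (ν Set.univ).toReal * ∫ x, K x x ∂ν with hA
  have htend : Filter.Tendsto (fun n : ℕ => -((2:ℝ)⁻¹ ^ n * A)) Filter.atTop (nhds 0) := by
    have h2 : Filter.Tendsto (fun n : ℕ => ((2:ℝ)⁻¹) ^ n) Filter.atTop (nhds 0) :=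
      tendsto_pow_atTop_nhds_zero_of_lt_one (by norm_num) (by norm_num)
    have := (h2.mul_const A).neg
    simpa using this
  exact le_of_tendsto htend (Filter.Eventually.of_forall h)
/-- A kernel on `ℝ² × ℝ²` is symmetric of positive type. -/
def IsSymPosType (w : (ℝ × ℝ) → (ℝ × ℝ) → ℝ) : Prop :=
  (∀ x y, w x y = w y x) ∧
  ∀ (k : ℕ) (z : Fin k → ℝ × ℝ) (c : Fin k → ℝ),
    0 ≤ ∑ i : Fin k, ∑ j : Fin k, c i * c j * w (z i) (z j)

set_option maxHeartbeats 2000000 in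
/-- For a symmetric kernel of positive type `w` and nonnegative `g`, flipping
the sign of `w` in the exponent decreases the integral:
`∬ e^{w(x,y)} g(x) g(y) ≥ ∬ e^{−w(x,y)} g(x) g(y)`. -/
theorem statement8 (w : (ℝ × ℝ) → (ℝ × ℝ) → ℝ)
    (hwmeas : Measurable fun z : (ℝ × ℝ) × (ℝ × ℝ) => w z.1 z.2)
    (hw : IsSymPosType w)
    (g : ℝ × ℝ → ℝ) (hgmeas : Measurable g) (hg0 : ∀ x, 0 ≤ g x)
    (hfin : (∫⁻ z : (ℝ × ℝ) × (ℝ × ℝ),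
        ENNReal.ofReal (Real.exp |w z.1 z.2| * g z.1 * g z.2)) < ⊤) :
    (∫ z : (ℝ × ℝ) × (ℝ × ℝ), Real.exp (-(w z.1 z.2)) * g z.1 * g z.2)
      ≤ ∫ z : (ℝ × ℝ) × (ℝ × ℝ), Real.exp (w z.1 z.2) * g z.1 * g z.2 := by
  set K : (ℝ × ℝ) → (ℝ × ℝ) → ℝ :=
    fun x y => Real.exp (w x y) - Real.exp (-(w x y)) with hK
  set K' : (ℝ × ℝ) → (ℝ × ℝ) → ℝ := fun x y => K x y * (g x * g y) with hK'
  obtain ⟨hwsym, hwpos⟩ := hw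
  have hposW : PosType w := hwpos
  have hsymK : ∀ x y, K x y = K y x := fun x y => by simp only [hK, hwsym x y]
  have hposK : PosType K := posType_sinh hwsym hposW
  have hsymK' : ∀ x y, K' x y = K' y x := fun x y => by
    simp only [hK', hsymK x y]; ring
  have hposK' : PosType K' := by
    intro k z c
    have h := hposK k z (fun i => c i * g (z i))
    have e : ∑ i : Fin k, ∑ j : Fin k,
        (c i * g (z i)) * (c j * g (z j)) * K (z i) (z j)
        = ∑ i : Fin k, ∑ j : Fin k, c i * c j * K' (z i) (z j) := by
      refine Finset.sum_congr rfl fun i _ => Finset.sum_congr rfl fun j _ => ?_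
      simp only [hK']; ring
    exact e ▸ h
  -- measurability
  have hKm : Measurable (fun p : (ℝ × ℝ) × (ℝ × ℝ) => K p.1 p.2) :=
    (hwmeas.exp).sub (hwmeas.neg.exp)
  have hK'm : Measurable (fun p : (ℝ × ℝ) × (ℝ × ℝ) => K' p.1 p.2) :=
    hKm.mul ((hgmeas.comp measurable_fst).mul (hgmeas.comp measurable_snd))
  have hwdm : Measurable (fun x : ℝ × ℝ => w x x) :=
    hwmeas.comp (measurable_id.prodMk measurable_id)
  have hKdm : Measurable (fun x : ℝ × ℝ => K x x) := by
    simp only [hK]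
    exact (hwdm.exp).sub (hwdm.neg.exp)
  -- the dominating function
  set G : (ℝ × ℝ) × (ℝ × ℝ) → ℝ :=
    fun z => Real.exp |w z.1 z.2| * g z.1 * g z.2 with hG
  have hGm : Measurable G :=
    ((hwmeas.abs.exp).mul (hgmeas.comp measurable_fst)).mul (hgmeas.comp measurable_snd)
  have hGnn : ∀ z, 0 ≤ G z := fun z => by
    simp only [hG]
    exact mul_nonneg (mul_nonneg (Real.exp_nonneg _) (hg0 _)) (hg0 _)
  have hGint : Integrable G := by
    refine ⟨hGm.aestronglyMeasurable, ?_⟩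
    rw [hasFiniteIntegral_iff_ofReal (Filter.Eventually.of_forall hGnn)]
    exact hfin
  -- |K x y| ≤ exp |w x y|
  have hKabs : ∀ x y, |K x y| ≤ Real.exp |w x y| := by
    intro x y
    have h1 : Real.exp (w x y) ≤ Real.exp |w x y| := Real.exp_le_exp.mpr (le_abs_self _)
    have h2 : Real.exp (-(w x y)) ≤ Real.exp |w x y| := Real.exp_le_exp.mpr (neg_le_abs _)
    have h3 : 0 < Real.exp (w x y) := Real.exp_pos _
    have h4 : 0 < Real.exp (-(w x y)) := Real.exp_pos _
    rw [abs_le]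
    constructor <;> simp only [hK] <;> linarith
  have hK'bound : ∀ z : (ℝ × ℝ) × (ℝ × ℝ), ‖K' z.1 z.2‖ ≤ G z := by
    intro z
    rw [Real.norm_eq_abs]
    simp only [hK', hG]
    rw [abs_mul, abs_of_nonneg (mul_nonneg (hg0 _) (hg0 _)), mul_assoc]
    exact mul_le_mul_of_nonneg_right (hKabs _ _) (mul_nonneg (hg0 _) (hg0 _))
  have hK'int : Integrable (fun z : (ℝ × ℝ) × (ℝ × ℝ) => K' z.1 z.2) :=
    hGint.mono' hK'm.aestronglyMeasurable (Filter.Eventually.of_forall hK'bound)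
  -- truncation sets
  set E : ℕ → Set (ℝ × ℝ) :=
    fun M => ({x | K x x ≤ M} ∩ {x | g x ≤ M}) ∩ Metric.closedBall 0 M with hE
  have hEmeas : ∀ M, MeasurableSet (E M) := fun M =>
    ((measurableSet_le hKdm measurable_const).inter
      (measurableSet_le hgmeas measurable_const)).inter measurableSet_closedBall
  have hEfin : ∀ M : ℕ, IsFiniteMeasure (volume.restrict (E M)) := by
    intro M
    refine ⟨?_⟩
    rw [Measure.restrict_apply_univ]
    exact lt_of_le_of_lt (measure_mono Set.inter_subset_right) measure_closedBall_lt_top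
  have hKdnn : ∀ x, 0 ≤ K x x := by
    intro x
    have := hposK 1 ![x] ![1]
    simpa using this
  -- nonnegativity of each truncated integral
  have hnn : ∀ M : ℕ, 0 ≤ ∫ p : (ℝ × ℝ) × (ℝ × ℝ), K' p.1 p.2
      ∂((volume.restrict (E M)).prod (volume.restrict (E M))) := by
    intro M
    haveI := hEfin M
    refine posType_integral_nonneg (volume.restrict (E M)) K' hK'm hsymK' hposK' ?_ ?_
    · rw [Measure.prod_restrict]
      refine Integrable.restrict ?_
      rwa [← Measure.volume_eq_prod]
    · -- diagonal integrable : bounded on E M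
      have hK'dm : Measurable (fun x : ℝ × ℝ => K' x x) := by
        simp only [hK']
        exact hKdm.mul (hgmeas.mul hgmeas)
      refine Integrable.mono' (g := fun _ => (M : ℝ) * ((M : ℝ) * (M : ℝ)))
        (integrable_const _) hK'dm.aestronglyMeasurable ?_
      rw [ae_restrict_iff' (hEmeas M)]
      refine Filter.Eventually.of_forall fun x hx => ?_
      obtain ⟨⟨h1, h2⟩, _⟩ := hx
      simp only [Set.mem_setOf_eq] at h1 h2
      have hgx := hg0 x
      have hKxx := hKdnn x
      rw [Real.norm_eq_abs]
      simp only [hK']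
      rw [abs_of_nonneg (mul_nonneg hKxx (mul_nonneg hgx hgx))]
      have hMnn : (0:ℝ) ≤ M := le_trans hKxx h1
      exact mul_le_mul h1 (mul_le_mul h2 h2 hgx hMnn) (mul_nonneg hgx hgx) hMnn
  -- indicator functions and dominated convergence
  set F : ℕ → (ℝ × ℝ) × (ℝ × ℝ) → ℝ :=
    fun M => Set.indicator (E M ×ˢ E M) (fun z => K' z.1 z.2) with hF
  have hFint : ∀ M, ∫ z, F M z = ∫ p : (ℝ × ℝ) × (ℝ × ℝ), K' p.1 p.2
      ∂((volume.restrict (E M)).prod (volume.restrict (E M))) := by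
    intro M
    rw [hF, integral_indicator ((hEmeas M).prod (hEmeas M)), Measure.prod_restrict,
      ← Measure.volume_eq_prod]
  have htendF : Filter.Tendsto (fun M => ∫ z, F M z) Filter.atTop
      (nhds (∫ z : (ℝ × ℝ) × (ℝ × ℝ), K' z.1 z.2)) := by
    refine tendsto_integral_of_dominated_convergence G
      (fun M => (hK'm.indicator ((hEmeas M).prod (hEmeas M))).aestronglyMeasurable)
      hGint (fun M => Filter.Eventually.of_forall fun z => ?_)
      (Filter.Eventually.of_forall fun z => ?_)
    · by_cases hz : z ∈ E M ×ˢ E M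
      · rw [hF]; simp only [Set.indicator_of_mem hz]; exact hK'bound z
      · rw [hF]; simp only [Set.indicator_of_notMem hz, norm_zero]; exact hGnn z
    · -- pointwise convergence
      obtain ⟨N, hN⟩ := exists_nat_ge (max (max (K z.1 z.1) (g z.1))
        (max (max (K z.2 z.2) (g z.2)) (max ‖z.1‖ ‖z.2‖)))
      have hmem : ∀ M : ℕ, N ≤ M → z ∈ E M ×ˢ E M := by
        intro M hM
        have hNM : (N : ℝ) ≤ M := Nat.cast_le.mpr hM
        constructor
        · refine ⟨⟨?_, ?_⟩, ?_⟩
          · exact le_trans (le_trans (le_trans (le_max_left _ _) (le_max_left _ _)) hN) hNM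
          · exact le_trans (le_trans (le_trans (le_max_right _ _) (le_max_left _ _)) hN) hNM
          · rw [Metric.mem_closedBall, dist_zero_right]
            exact le_trans (le_trans (le_trans (le_trans (le_max_left _ _)
              (le_max_right _ _)) (le_max_right _ _)) hN) hNM
        · refine ⟨⟨?_, ?_⟩, ?_⟩
          · exact le_trans (le_trans (le_trans (le_trans (le_max_left _ _)
              (le_max_left _ _)) (le_max_right _ _)) hN) hNM
          · exact le_trans (le_trans (le_trans (le_trans (le_max_right _ _)
              (le_max_left _ _)) (le_max_right _ _)) hN) hNM
          · rw [Metric.mem_closedBall, dist_zero_right]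
            exact le_trans (le_trans (le_trans (le_trans (le_max_right _ _)
              (le_max_right _ _)) (le_max_right _ _)) hN) hNM
      refine Filter.Tendsto.congr' ?_ (tendsto_const_nhds (x := K' z.1 z.2))
      rw [Filter.EventuallyEq, Filter.eventually_atTop]
      exact ⟨N, fun M hM => by rw [hF]; simp [Set.indicator_of_mem (hmem M hM)]⟩
  have hmain : 0 ≤ ∫ z : (ℝ × ℝ) × (ℝ × ℝ), K' z.1 z.2 := by
    refine ge_of_tendsto htendF ?_
    refine Filter.Eventually.of_forall fun M => ?_
    rw [hFint M]
    exact hnn M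
  -- split the integral
  have hplus : Integrable (fun z : (ℝ × ℝ) × (ℝ × ℝ) =>
      Real.exp (w z.1 z.2) * g z.1 * g z.2) := by
    refine hGint.mono' ((hwmeas.exp.mul (hgmeas.comp measurable_fst)).mul
      (hgmeas.comp measurable_snd)).aestronglyMeasurable
      (Filter.Eventually.of_forall fun z => ?_)
    rw [Real.norm_eq_abs, abs_of_nonneg (mul_nonneg (mul_nonneg (Real.exp_nonneg _)
      (hg0 _)) (hg0 _))]
    simp only [hG]
    have := Real.exp_le_exp.mpr (le_abs_self (w z.1 z.2))
    exact mul_le_mul_of_nonneg_right (mul_le_mul_of_nonneg_right this (hg0 z.1)) (hg0 z.2)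
  have hminus : Integrable (fun z : (ℝ × ℝ) × (ℝ × ℝ) =>
      Real.exp (-(w z.1 z.2)) * g z.1 * g z.2) := by
    refine hGint.mono' ((hwmeas.neg.exp.mul (hgmeas.comp measurable_fst)).mul
      (hgmeas.comp measurable_snd)).aestronglyMeasurable
      (Filter.Eventually.of_forall fun z => ?_)
    rw [Real.norm_eq_abs, abs_of_nonneg (mul_nonneg (mul_nonneg (Real.exp_nonneg _)
      (hg0 _)) (hg0 _))]
    simp only [hG]
    have := Real.exp_le_exp.mpr (neg_le_abs (w z.1 z.2))
    exact mul_le_mul_of_nonneg_right (mul_le_mul_of_nonneg_right this (hg0 z.1)) (hg0 z.2)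
  have hsub : ∫ z : (ℝ × ℝ) × (ℝ × ℝ), K' z.1 z.2
      = (∫ z : (ℝ × ℝ) × (ℝ × ℝ), Real.exp (w z.1 z.2) * g z.1 * g z.2)
        - ∫ z : (ℝ × ℝ) × (ℝ × ℝ), Real.exp (-(w z.1 z.2)) * g z.1 * g z.2 := by
    rw [← integral_sub hplus hminus]
    refine integral_congr_ae (Filter.Eventually.of_forall fun z => ?_)
    simp only [hK', hK]
    ring
  rw [hsub] at hmain
  linarith
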